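/- Let H be a nonempty axis-aligned region in ℝ^{n₁}×⋯×ℝ^{n_k} and let M₁,…,M_m : ℝ^{n₁}×⋯×ℝ^{n_k} → ℝ be multilinear functions. Then the simultaneous hull conv{(x, M₁(x),…,M_m(x)) : x ∈ H} equals conv{(v, M₁(v),…,M_m(v)) : v ∈ corner(H)}. -/

import Mathlib

/-- `M` is multilinear in the block variables: fixing all blocks except the `j`-th yields an
affine map `ℝ^{n_j} → ℝ`. -/
def IsBlockMultilinear {k : ℕ} {n : Fin k → ℕ}
    (M : ((j : Fin k) → (Fin (n j) → ℝ)) → ℝ) : Prop :=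
  ∀ (j : Fin k) (x : (j : Fin k) → Fin (n j) → ℝ),
    ∃ A : (Fin (n j) → ℝ) →ᵃ[ℝ] ℝ, ∀ y : Fin (n j) → ℝ, M (Function.update x j y) = A y

/-- An axis-aligned region in `ℝ^{n₁} × ⋯ × ℝ^{n_k}`: a finite union of products of
polytopes (convex hulls of nonempty finite sets), one polytope per block. -/
def IsBlockAxisAligned {k : ℕ} {n : Fin k → ℕ}
    (H : Set ((j : Fin k) → Fin (n j) → ℝ)) : Prop :=
  ∃ (N : ℕ) (V : Fin N → (j : Fin k) → Finset (Fin (n j) → ℝ)),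
    (∀ i j, (V i j).Nonempty) ∧
    H = ⋃ i : Fin N, {x | ∀ j, x j ∈ convexHull ℝ ((V i j : Set (Fin (n j) → ℝ)))}

/-- The corner points of a region `H`: points of `H` each of whose block coordinates is an
extreme point of the convex hull of the corresponding slice of `H`. -/
def blockCornerSet {k : ℕ} {n : Fin k → ℕ}
    (H : Set ((j : Fin k) → Fin (n j) → ℝ)) : Set ((j : Fin k) → Fin (n j) → ℝ) :=
  {v | v ∈ H ∧ ∀ j, v j ∈ Set.extremePoints ℝ
    (convexHull ℝ {y : Fin (n j) → ℝ | Function.update v j y ∈ H})}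

open Set


/-- The affine map `y ↦ Function.update x j y`. -/
noncomputable def updAff {k : ℕ} {n : Fin k → ℕ}
    (x : (j : Fin k) → Fin (n j) → ℝ) (j : Fin k) :
    (Fin (n j) → ℝ) →ᵃ[ℝ] ((j : Fin k) → Fin (n j) → ℝ) where
  toFun y := Function.update x j y
  linear := LinearMap.single ℝ (fun j => Fin (n j) → ℝ) j
  map_vadd' p v := by
    funext j'
    by_cases h : j' = j
    · subst h; simp
    · simp [Function.update_of_ne h, Pi.single_eq_of_ne h]

/-- Pairing of two affine maps into a product. -/
noncomputable def affPair {E Q R : Type*} [AddCommGroup E] [Module ℝ E]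
    [AddCommGroup Q] [Module ℝ Q] [AddCommGroup R] [Module ℝ R]
    (f : E →ᵃ[ℝ] Q) (g : E →ᵃ[ℝ] R) : E →ᵃ[ℝ] (Q × R) where
  toFun x := (f x, g x)
  linear := f.linear.prod g.linear
  map_vadd' p v :=
    Prod.ext (f.map_vadd p v) (g.map_vadd p v)

@[simp] lemma affPair_apply {E Q R : Type*} [AddCommGroup E] [Module ℝ E]
    [AddCommGroup Q] [Module ℝ Q] [AddCommGroup R] [Module ℝ R]
    (f : E →ᵃ[ℝ] Q) (g : E →ᵃ[ℝ] R) (x : E) : affPair f g x = (f x, g x) := rfl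

@[simp] lemma updAff_apply {k : ℕ} {n : Fin k → ℕ}
    (x : (j : Fin k) → Fin (n j) → ℝ) (j : Fin k) (y : Fin (n j) → ℝ) :
    updAff x j y = Function.update x j y := rfl

/-- A block-affine function maps a product of convex hulls into the convex hull of the
image of the grid. -/
lemma grid_lemma {k : ℕ} {n : Fin k → ℕ} {F : Type*} [AddCommGroup F] [Module ℝ F]
    (g : ((j : Fin k) → Fin (n j) → ℝ) → F)
    (hg : ∀ (j : Fin k) (x : (j : Fin k) → Fin (n j) → ℝ),
      ∃ A : (Fin (n j) → ℝ) →ᵃ[ℝ] F, ∀ y, g (Function.update x j y) = A y)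
    (V : (j : Fin k) → Finset (Fin (n j) → ℝ)) :
    ∀ (S : Finset (Fin k)) (x : (j : Fin k) → Fin (n j) → ℝ),
      (∀ j ∈ S, x j ∈ convexHull ℝ (V j : Set (Fin (n j) → ℝ))) →
      (∀ j ∉ S, x j ∈ V j) →
      g x ∈ convexHull ℝ (g '' {y | ∀ j, y j ∈ V j}) := by
  classical
  intro S
  induction S using Finset.induction_on with
  | empty =>
    intro x _ h2
    exact subset_convexHull _ _ ⟨x, fun j => h2 j (by simp), rfl⟩
  | @insert j S hjS ih =>
    intro x h1 h2
    obtain ⟨A, hA⟩ := hg j x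
    have hgx : g x = A (x j) := by rw [← hA, Function.update_eq_self]
    have hxj : x j ∈ convexHull ℝ (V j : Set (Fin (n j) → ℝ)) :=
      h1 j (Finset.mem_insert_self _ _)
    have hsub : A '' (V j : Set (Fin (n j) → ℝ)) ⊆
        convexHull ℝ (g '' {y | ∀ j, y j ∈ V j}) := by
      rintro _ ⟨y, hy, rfl⟩
      rw [← hA]
      apply ih (Function.update x j y)
      · intro j' hj'
        rw [Function.update_of_ne (by rintro rfl; exact hjS hj')]
        exact h1 j' (Finset.mem_insert_of_mem hj')
      · intro j' hj'
        by_cases h : j' = j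
        · subst h; simpa using hy
        · rw [Function.update_of_ne h]
          exact h2 j' (by simp [Finset.mem_insert, h, hj'])
    have hmem : A (x j) ∈ convexHull ℝ (A '' (V j : Set (Fin (n j) → ℝ))) := by
      rw [← A.image_convexHull]
      exact Set.mem_image_of_mem _ hxj
    rw [hgx]
    exact convexHull_min hsub (convex_convexHull _ _) hmem

theorem simultaneous_hull_of_multilinears_corner_generated
    (k : ℕ) (hk : 0 < k) (n : Fin k → ℕ) (hn : ∀ j, 0 < n j)
    (H : Set ((j : Fin k) → Fin (n j) → ℝ)) (hne : H.Nonempty)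
    (hH : IsBlockAxisAligned H)
    (m : ℕ) (M : Fin m → ((j : Fin k) → (Fin (n j) → ℝ)) → ℝ)
    (hM : ∀ i, IsBlockMultilinear (M i)) :
    convexHull ℝ
        ((fun x : (j : Fin k) → Fin (n j) → ℝ => (x, fun i : Fin m => M i x)) '' H) =
      convexHull ℝ
        ((fun v : (j : Fin k) → Fin (n j) → ℝ => (v, fun i : Fin m => M i v)) ''
          blockCornerSet H) := by
  classical
  set g : ((j : Fin k) → Fin (n j) → ℝ) →
      ((j : Fin k) → Fin (n j) → ℝ) × (Fin m → ℝ) :=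
    fun x => (x, fun i : Fin m => M i x) with hgdef
  obtain ⟨N, V, hVne, hHeq⟩ := hH
  -- g is block-affine
  have hg : ∀ (j : Fin k) (x : (j : Fin k) → Fin (n j) → ℝ),
      ∃ A : (Fin (n j) → ℝ) →ᵃ[ℝ]
        ((j : Fin k) → Fin (n j) → ℝ) × (Fin m → ℝ), ∀ y, g (Function.update x j y) = A y := by
    intro j x
    choose A hA using fun i => hM i j x
    refine ⟨affPair (updAff x j) (AffineMap.pi A), fun y => ?_⟩
    refine Prod.ext rfl (funext fun i => ?_)
    exact hA i y
  -- the grid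
  set G : Set ((j : Fin k) → Fin (n j) → ℝ) := ⋃ i : Fin N, {y | ∀ j, y j ∈ V i j} with hGdef
  have hGH : G ⊆ H := by
    rintro y hy
    rw [hHeq]
    obtain ⟨_, ⟨i, rfl⟩, hy⟩ := hy
    exact Set.mem_iUnion.2 ⟨i, fun j => subset_convexHull _ _ (hy j)⟩
  have key1 : g '' H ⊆ convexHull ℝ (g '' G) := by
    rintro _ ⟨x, hx, rfl⟩
    rw [hHeq] at hx
    obtain ⟨_, ⟨i, rfl⟩, hx⟩ := hx
    have := grid_lemma g hg (V i) Finset.univ x (fun j _ => hx j)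
      (fun j hj => absurd (Finset.mem_univ j) hj)
    exact convexHull_mono (Set.image_mono (Set.subset_iUnion
      (fun i : Fin N => {y : (j : Fin k) → Fin (n j) → ℝ | ∀ j, y j ∈ V i j}) i)) this
  have hullEq : convexHull ℝ (g '' H) = convexHull ℝ (g '' G) :=
    le_antisymm (convexHull_min key1 (convex_convexHull _ _))
      (convexHull_mono (Set.image_mono hGH))
  -- finiteness
  have hGfin : G.Finite := by
    apply Set.finite_iUnion
    intro i
    have : {y : (j : Fin k) → Fin (n j) → ℝ | ∀ j, y j ∈ V i j} = Set.pi Set.univ (fun j => (V i j : Set (Fin (n j) → ℝ))) := by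
      ext y; simp [Set.pi]
    rw [this]
    exact Set.Finite.pi (fun j => (V i j).finite_toSet)
  have hgGfin : (g '' G).Finite := hGfin.image g
  set E := Set.extremePoints ℝ (convexHull ℝ (g '' G)) with hEdef
  have hE1 : E ⊆ g '' G := extremePoints_convexHull_subset
  have hEfin : E.Finite := hgGfin.subset hE1
  have hKM : convexHull ℝ E = convexHull ℝ (g '' G) := by
    have := closure_convexHull_extremePoints (hgGfin.isCompact_convexHull ℝ) (convex_convexHull _ _)
    rw [← this, (hEfin.isClosed_convexHull ℝ).closure_eq]
  -- extreme points come from corner points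
  have hE2 : E ⊆ g '' blockCornerSet H := by
    intro e he
    obtain ⟨v, hvG, rfl⟩ := hE1 he
    have hvH : v ∈ H := hGH hvG
    refine ⟨v, ⟨hvH, fun j => ?_⟩, rfl⟩
    set s : Set (Fin (n j) → ℝ) := {y | Function.update v j y ∈ H} with hsdef
    obtain ⟨A, hA⟩ := hg j v
    have hvs : v j ∈ s := by
      simp only [hsdef, Set.mem_setOf_eq, Function.update_eq_self]
      exact hvH
    have hAconv : ∀ z ∈ convexHull ℝ s, A z ∈ convexHull ℝ (g '' G) := by
      intro z hz
      have : A '' (convexHull ℝ s) ⊆ convexHull ℝ (g '' G) := by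
        rw [A.image_convexHull]
        refine convexHull_min ?_ (convex_convexHull _ _)
        rintro _ ⟨y, hy, rfl⟩
        rw [← hA]
        exact key1 ⟨_, hy, rfl⟩
      exact this ⟨z, hz, rfl⟩
    rw [mem_extremePoints]
    refine ⟨subset_convexHull _ _ hvs, fun x₁ hx₁ x₂ hx₂ hseg => ?_⟩
    have hgv : g v = A (v j) := by rw [← hA, Function.update_eq_self]
    have hAseg : g v ∈ openSegment ℝ (A x₁) (A x₂) := by
      rw [hgv, ← image_openSegment]
      exact ⟨v j, hseg, rfl⟩
    obtain ⟨h1, h2⟩ := (mem_extremePoints.1 he).2 (A x₁) (hAconv _ hx₁) (A x₂) (hAconv _ hx₂) hAseg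
    constructor
    · have : Function.update v j x₁ = v := congrArg Prod.fst ((hA x₁).trans h1)
      simpa using congrFun this j
    · have : Function.update v j x₂ = v := congrArg Prod.fst ((hA x₂).trans h2)
      simpa using congrFun this j
  -- conclude
  refine le_antisymm ?_ (convexHull_mono (Set.image_mono (fun v hv => hv.1)))
  calc convexHull ℝ (g '' H) = convexHull ℝ (g '' G) := hullEq
    _ = convexHull ℝ E := hKM.symm
    _ ≤ convexHull ℝ (g '' blockCornerSet H) := convexHull_mono hE2
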